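/- For any closed set C ⊂ (0,1) of Lebesgue measure zero, and any ε > 0, there exists a finite subset C_ε ⊂ C such that ‖∇(μ_C − μ_{C_ε})‖₂² < ε. Consequently there is a sequence of finite sets Cⱼ ⊂ C with μ_{Cⱼ} → μ_C in H¹₀(B). -/

import Mathlib

open Real MeasureTheory Set Filter Topology

/-- `w` is the Moser-Carleson-Chang tower `μ_C` on the closed set `C ⊆ (0,1)`
(with `C₋ = ∅`): a continuous radial `H¹₀`-function on the unit disk equal to
`√(log(1/r)/(2π))` on `C` and radially harmonic on the complementary intervals. -/
def IsTower (C : Set ℝ) (w : ℝ → ℝ) : Prop :=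
  IsClosed C ∧ C.Nonempty ∧ C ⊆ Set.Ioo 0 1 ∧
  ContinuousOn w (Set.Ioc 0 1) ∧ w 1 = 0 ∧
  (∀ r ∈ C, w r = Real.sqrt (Real.log r⁻¹ / (2 * π))) ∧
  (∀ a b : ℝ, a < b → Set.Ioo a b ⊆ Set.Ioo 0 1 \ C →
    ∃ A B : ℝ, ∀ r ∈ Set.Ioo a b, w r = A + B * Real.log r⁻¹) ∧
  MeasureTheory.IntegrableOn (fun r => (deriv w r) ^ 2 * r) (Set.Ioo 0 1) volume


noncomputable def gfun (r : ℝ) : ℝ := Real.sqrt (Real.log r⁻¹ / (2 * π))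

noncomputable def chordFun (α β r : ℝ) : ℝ :=
  gfun α + (gfun β - gfun α) * (Real.log r⁻¹ - Real.log α⁻¹) /
    (Real.log β⁻¹ - Real.log α⁻¹)

noncomputable def ufun (F : Set ℝ) (r : ℝ) : ℝ :=
  gfun (sSup (F ∩ Set.Iic (max r (sInf F)))) +
    (gfun (sInf (F ∩ Set.Ici (max r (sInf F)))) - gfun (sSup (F ∩ Set.Iic (max r (sInf F))))) *
      (Real.log (max r (sInf F))⁻¹ - Real.log (sSup (F ∩ Set.Iic (max r (sInf F))))⁻¹) /
      (Real.log (sInf (F ∩ Set.Ici (max r (sInf F))))⁻¹ -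
        Real.log (sSup (F ∩ Set.Iic (max r (sInf F))))⁻¹)

lemma log_inv_pos {x : ℝ} (hx : x ∈ Set.Ioo (0:ℝ) 1) : 0 < Real.log x⁻¹ := by
  rw [Real.log_inv]
  exact neg_pos.mpr (Real.log_neg hx.1 hx.2)

lemma sSup_inter_Iic_self {F : Set ℝ} {x : ℝ} (hx : x ∈ F) :
    sSup (F ∩ Set.Iic x) = x :=
  IsGreatest.csSup_eq ⟨⟨hx, le_refl x⟩, fun _ hy => hy.2⟩

lemma sInf_inter_Ici_self {F : Set ℝ} {x : ℝ} (hx : x ∈ F) :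
    sInf (F ∩ Set.Ici x) = x :=
  IsLeast.csInf_eq ⟨⟨hx, le_refl x⟩, fun _ hy => hy.2⟩

lemma ufun_const_left {F : Set ℝ} (hF : F.Finite) (hne : F.Nonempty) {r : ℝ}
    (hr : r ≤ sInf F) : ufun F r = gfun (sInf F) := by
  have hm : sInf F ∈ F := Set.Nonempty.csInf_mem hne hF
  have h1 : max r (sInf F) = sInf F := max_eq_right hr
  rw [ufun, h1, sSup_inter_Iic_self hm, sInf_inter_Ici_self hm]
  simp

lemma ufun_mem {F : Set ℝ} (hF : F.Finite) {x : ℝ} (hx : x ∈ F) :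
    ufun F x = gfun x := by
  have h1 : max x (sInf F) = x := max_eq_left (csInf_le hF.bddBelow hx)
  rw [ufun, h1, sSup_inter_Iic_self hx, sInf_inter_Ici_self hx]
  simp

lemma ufun_chord {F : Set ℝ} (hF : F.Finite) {α β : ℝ} (hα : α ∈ F) (hβ : β ∈ F)
    (hgap : Set.Ioo α β ∩ F = ∅) {r : ℝ} (hr : r ∈ Set.Ioo α β) :
    ufun F r = chordFun α β r := by
  have hm : sInf F ≤ α := csInf_le hF.bddBelow hα
  have h1 : max r (sInf F) = r := max_eq_left (le_trans hm hr.1.le)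
  have ha : sSup (F ∩ Set.Iic r) = α := by
    refine IsGreatest.csSup_eq ⟨⟨hα, hr.1.le⟩, fun τ hτ => ?_⟩
    by_contra h
    push_neg at h
    exact Set.eq_empty_iff_forall_notMem.1 hgap τ ⟨⟨h, lt_of_le_of_lt hτ.2 hr.2⟩, hτ.1⟩
  have hb : sInf (F ∩ Set.Ici r) = β := by
    refine IsLeast.csInf_eq ⟨⟨hβ, hr.2.le⟩, fun τ hτ => ?_⟩
    by_contra h
    push_neg at h
    exact Set.eq_empty_iff_forall_notMem.1 hgap τ ⟨⟨lt_of_lt_of_le hr.1 hτ.2, h⟩, hτ.1⟩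
  rw [ufun, h1, ha, hb, chordFun]

lemma ufun_tail {F : Set ℝ} (hF : F.Finite) (hne : F.Nonempty)
    (hF01 : F ⊆ Set.Ioo 0 1) {r : ℝ} (hr : sSup F < r) :
    ufun F r = gfun (sSup F) * Real.log r⁻¹ / Real.log (sSup F)⁻¹ := by
  have hM : sSup F ∈ F := Set.Nonempty.csSup_mem hne hF
  have hm : sInf F ≤ sSup F := csInf_le hF.bddBelow hM
  have h1 : max r (sInf F) = r := max_eq_left (le_trans hm hr.le)
  have ha : F ∩ Set.Iic r = F := by
    apply Set.inter_eq_self_of_subset_left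
    exact fun τ hτ => le_trans (le_csSup hF.bddAbove hτ) hr.le
  have hb : F ∩ Set.Ici r = ∅ := by
    apply Set.eq_empty_iff_forall_notMem.2
    intro τ ⟨hτF, hτr⟩
    exact absurd (le_csSup hF.bddAbove hτF) (not_le.mpr (lt_of_lt_of_le hr hτr))
  have hσM : Real.log (sSup F)⁻¹ ≠ 0 := ne_of_gt (log_inv_pos (hF01 hM))
  rw [ufun, h1, ha, hb, Real.sInf_empty]
  simp only [inv_zero, Real.log_zero, zero_div]
  rw [show gfun 0 = 0 by simp [gfun]]
  generalize gfun (sSup F) = G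
  generalize hσ : Real.log (sSup F)⁻¹ = σM at hσM ⊢
  field_simp
  ring

lemma continuousAt_log_inv {x : ℝ} (hx : x ≠ 0) :
    ContinuousAt (fun r : ℝ => Real.log r⁻¹) x :=
  (Real.continuousAt_log (inv_ne_zero hx)).comp (continuousAt_inv₀ hx)

lemma chordFun_continuousAt {α β x : ℝ} (hx : x ≠ 0) :
    ContinuousAt (chordFun α β) x := by
  unfold chordFun
  exact continuousAt_const.add
    ((((continuousAt_log_inv hx).sub continuousAt_const).const_mul _).div_const _)

lemma log_inv_lt_log_inv {α β : ℝ} (h0 : 0 < α) (hαβ : α < β) :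
    Real.log β⁻¹ < Real.log α⁻¹ :=
  Real.log_lt_log (inv_pos.mpr (lt_trans h0 hαβ)) ((inv_lt_inv₀ (lt_trans h0 hαβ) h0).mpr hαβ)

lemma chordFun_left {α β : ℝ} (h0 : 0 < α) (hαβ : α < β) : chordFun α β α = gfun α := by
  unfold chordFun
  simp

lemma chordFun_right {α β : ℝ} (h0 : 0 < α) (hαβ : α < β) : chordFun α β β = gfun β := by
  have hD : Real.log β⁻¹ - Real.log α⁻¹ ≠ 0 :=
    ne_of_lt (sub_neg.mpr (log_inv_lt_log_inv h0 hαβ))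
  unfold chordFun
  rw [mul_div_assoc, div_self hD, mul_one]
  ring

lemma exists_gap {F : Set ℝ} (hF : F.Finite) (hne : F.Nonempty) {r : ℝ}
    (hm : sInf F < r) (hM : r < sSup F) (hr : r ∉ F) :
    ∃ α β, α ∈ F ∧ β ∈ F ∧ Set.Ioo α β ∩ F = ∅ ∧ r ∈ Set.Ioo α β := by
  have h1 : (F ∩ Set.Iic r).Nonempty := ⟨sInf F, Set.Nonempty.csInf_mem hne hF, hm.le⟩
  have h2 : (F ∩ Set.Ici r).Nonempty := ⟨sSup F, Set.Nonempty.csSup_mem hne hF, hM.le⟩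
  refine ⟨sSup (F ∩ Set.Iic r), sInf (F ∩ Set.Ici r), ?_, ?_, ?_, ?_, ?_⟩
  · exact (Set.Nonempty.csSup_mem h1 (hF.inter_of_left _)).1
  · exact (Set.Nonempty.csInf_mem h2 (hF.inter_of_left _)).1
  · apply Set.eq_empty_iff_forall_notMem.2
    rintro τ ⟨⟨hτ1, hτ2⟩, hτF⟩
    rcases le_or_gt τ r with h | h
    · exact absurd (le_csSup (hF.inter_of_left _).bddAbove
        (⟨hτF, h⟩ : τ ∈ F ∩ Set.Iic r)) (not_le.mpr hτ1)
    · exact absurd (csInf_le (hF.inter_of_left _).bddBelow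
        (⟨hτF, h.le⟩ : τ ∈ F ∩ Set.Ici r)) (not_le.mpr hτ2)
  · have h3 := Set.Nonempty.csSup_mem h1 (hF.inter_of_left _)
    rcases lt_or_eq_of_le (Set.mem_Iic.mp h3.2) with h | h
    · exact h
    · exact absurd (h ▸ h3.1) hr
  · have h3 := Set.Nonempty.csInf_mem h2 (hF.inter_of_left _)
    rcases lt_or_eq_of_le (Set.mem_Ici.mp h3.2) with h | h
    · exact h
    · exact absurd (h ▸ h3.1) hr

lemma deriv_affine_log {f : ℝ → ℝ} {A B p q : ℝ} (hp : 0 ≤ p)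
    (h : ∀ r ∈ Set.Ioo p q, f r = A + B * Real.log r⁻¹) {x : ℝ} (hx : x ∈ Set.Ioo p q) :
    deriv f x = -B / x := by
  have hx0 : 0 < x := lt_of_le_of_lt hp hx.1
  have hev : f =ᶠ[𝓝 x] fun r => A - B * Real.log r := by
    filter_upwards [isOpen_Ioo.mem_nhds hx] with r hr
    rw [h r hr, Real.log_inv]; ring
  rw [hev.deriv_eq]
  have hd : HasDerivAt (fun r => A - B * Real.log r) (-(B * x⁻¹)) x := by
    simpa using (((Real.hasDerivAt_log hx0.ne').const_mul B).const_sub A)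
  rw [hd.deriv]; ring

lemma deriv_locally_const {f : ℝ → ℝ} {c p q : ℝ}
    (h : ∀ r ∈ Set.Ioo p q, f r = c) {x : ℝ} (hx : x ∈ Set.Ioo p q) :
    deriv f x = 0 := by
  have hev : f =ᶠ[𝓝 x] fun _ => c := by
    filter_upwards [isOpen_Ioo.mem_nhds hx] with r hr using h r hr
  rw [hev.deriv_eq, deriv_const]

lemma ufun_affine {F : Set ℝ} (hF : F.Finite) (hne : F.Nonempty) (hF01 : F ⊆ Set.Ioo 0 1)
    {a b : ℝ} (hab : a < b) (hsub : Set.Ioo a b ⊆ Set.Ioo 0 1 \ F) :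
    ∃ A B : ℝ, ∀ r ∈ Set.Ioo a b, ufun F r = A + B * Real.log r⁻¹ := by
  have hmF : sInf F ∈ F := Set.Nonempty.csInf_mem hne hF
  have hMF : sSup F ∈ F := Set.Nonempty.csSup_mem hne hF
  rcases le_or_gt b (sInf F) with hbm | hbm
  · exact ⟨gfun (sInf F), 0, fun r hr => by
      rw [ufun_const_left hF hne (le_of_lt (lt_of_lt_of_le hr.2 hbm))]; ring⟩
  rcases le_or_gt (sSup F) a with haM | haM
  · refine ⟨0, gfun (sSup F) / Real.log (sSup F)⁻¹, fun r hr => ?_⟩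
    rw [ufun_tail hF hne hF01 (lt_of_le_of_lt haM hr.1)]; ring
  -- middle case
  have hma : sInf F ≤ a := by
    by_contra h
    push_neg at h
    exact (hsub ⟨h, hbm⟩).2 hmF
  have hbM : b ≤ sSup F := by
    by_contra h
    push_neg at h
    exact (hsub ⟨haM, h⟩).2 hMF
  set x₀ := (a + b) / 2 with hx₀
  have hx₀ab : x₀ ∈ Set.Ioo a b := ⟨by simp [hx₀]; linarith, by simp [hx₀]; linarith⟩
  obtain ⟨hx₀01, hx₀F⟩ := hsub hx₀ab
  obtain ⟨α, β, hα, hβ, hgap, hx₀g⟩ := exists_gap hF hne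
    (lt_of_le_of_lt hma hx₀ab.1) (lt_of_lt_of_le hx₀ab.2 hbM) hx₀F
  have hsub2 : Set.Ioo a b ⊆ Set.Ioo α β := by
    intro r hr
    constructor
    · by_contra h
      push_neg at h
      have : α ∈ Set.Ioo a b := ⟨lt_of_lt_of_le hr.1 h, lt_trans hx₀g.1 hx₀ab.2⟩
      exact (hsub this).2 hα
    · by_contra h
      push_neg at h
      have : β ∈ Set.Ioo a b := ⟨lt_trans hx₀ab.1 hx₀g.2, lt_of_le_of_lt h hr.2⟩
      exact (hsub this).2 hβ
  refine ⟨gfun α - (gfun β - gfun α) * Real.log α⁻¹ / (Real.log β⁻¹ - Real.log α⁻¹),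
    (gfun β - gfun α) / (Real.log β⁻¹ - Real.log α⁻¹), fun r hr => ?_⟩
  rw [ufun_chord hF hα hβ hgap (hsub2 hr), chordFun]
  ring

lemma ufun_continuousAt {F : Set ℝ} (hF : F.Finite) (hne : F.Nonempty)
    (hF01 : F ⊆ Set.Ioo 0 1) {x : ℝ} (hx : 0 < x) : ContinuousAt (ufun F) x := by
  have hmF : sInf F ∈ F := hne.csInf_mem hF
  have hMF : sSup F ∈ F := hne.csSup_mem hF
  have hm01 := hF01 hmF
  have hM01 := hF01 hMF
  rcases lt_or_ge x (sInf F) with hxm | hxm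
  · have hev : (fun _ : ℝ => gfun (sInf F)) =ᶠ[𝓝 x] ufun F := by
      filter_upwards [isOpen_Iio.mem_nhds hxm] with r hr
      exact (ufun_const_left hF hne (le_of_lt hr)).symm
    exact continuousAt_const.congr hev
  rcases lt_or_ge (sSup F) x with hMx | hxM
  · have hev : (fun r => gfun (sSup F) * Real.log r⁻¹ / Real.log (sSup F)⁻¹)
        =ᶠ[𝓝 x] ufun F := by
      filter_upwards [isOpen_Ioi.mem_nhds hMx] with r hr
      exact (ufun_tail hF hne hF01 hr).symm
    exact ContinuousAt.congr
      (((continuousAt_log_inv hx.ne').const_mul _).div_const _) hev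
  rw [continuousAt_iff_continuous_left_right]
  constructor
  · -- left continuity on Iic x
    rcases eq_or_lt_of_le hxm with hxm' | hxm'
    · -- x = sInf F
      refine ContinuousWithinAt.congr (continuousWithinAt_const (b := gfun (sInf F)))
        (fun y hy => ?_) ?_
      · exact ufun_const_left hF hne (by rw [hxm']; exact hy)
      · exact ufun_const_left hF hne (le_of_eq hxm'.symm)
    · -- sInf F < x
      have hαne : (F ∩ Set.Iio x).Nonempty := ⟨sInf F, hmF, hxm'⟩
      have hβne : (F ∩ Set.Ici x).Nonempty := ⟨sSup F, hMF, hxM⟩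
      have hαmem := hαne.csSup_mem (hF.inter_of_left _)
      have hβmem := hβne.csInf_mem (hF.inter_of_left _)
      set α := sSup (F ∩ Set.Iio x) with hα
      set β := sInf (F ∩ Set.Ici x) with hβ
      have hαF : α ∈ F := hαmem.1
      have hαx : α < x := hαmem.2
      have hβF : β ∈ F := hβmem.1
      have hβx : x ≤ β := hβmem.2
      have h0α : (0:ℝ) < α := (hF01 hαF).1
      have hαβ : α < β := lt_of_lt_of_le hαx hβx
      have hgap : Set.Ioo α β ∩ F = ∅ := by
        apply Set.eq_empty_iff_forall_notMem.2
        rintro τ ⟨⟨hτ1, hτ2⟩, hτF⟩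
        rcases lt_or_ge τ x with h | h
        · exact absurd (le_csSup (hF.inter_of_left _).bddAbove
            ⟨hτF, Set.mem_Iio.mpr h⟩) (not_le.mpr hτ1)
        · exact absurd (csInf_le (hF.inter_of_left _).bddBelow
            ⟨hτF, Set.mem_Ici.mpr h⟩) (not_le.mpr hτ2)
      have key : ∀ y ∈ Set.Iic x ∩ Set.Ioi α, ufun F y = chordFun α β y := by
        intro y hy
        obtain ⟨hy1, hy2⟩ := hy
        rcases eq_or_lt_of_le (Set.mem_Iic.mp hy1) with heq | hyx
        · rw [heq]
          by_cases hxF : x ∈ F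
          · have hβy : β = x := by rw [hβ, sInf_inter_Ici_self hxF]
            rw [ufun_mem hF hxF, hβy]
            exact (chordFun_right h0α hαx).symm
          · have hyβ : x < β := lt_of_le_of_ne hβx (fun h => hxF (h ▸ hβF))
            exact ufun_chord hF hαF hβF hgap ⟨hαx, hyβ⟩
        · exact ufun_chord hF hαF hβF hgap ⟨Set.mem_Ioi.mp hy2, lt_of_lt_of_le hyx hβx⟩
      rw [← continuousWithinAt_inter (isOpen_Ioi.mem_nhds hαx)]
      exact ContinuousWithinAt.congr (chordFun_continuousAt hx.ne').continuousWithinAt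
        key (key x ⟨le_refl x, hαx⟩)
  · -- right continuity on Ici x
    rcases eq_or_lt_of_le hxM with hxM' | hxM'
    · -- x = sSup F
      have hσM : Real.log (sSup F)⁻¹ ≠ 0 := ne_of_gt (log_inv_pos hM01)
      have key : ∀ y ∈ Set.Ici x,
          ufun F y = gfun (sSup F) * Real.log y⁻¹ / Real.log (sSup F)⁻¹ := by
        intro y hy
        rcases eq_or_lt_of_le (Set.mem_Ici.mp hy) with heq | hyx
        · rw [← heq]
          rw [ufun_mem hF (show x ∈ F by rw [hxM']; exact hMF), hxM', mul_div_assoc,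
            div_self hσM, mul_one]
        · exact ufun_tail hF hne hF01 (by rw [← hxM']; exact hyx)
      have hcont : ContinuousAt
          (fun y : ℝ => gfun (sSup F) * Real.log y⁻¹ / Real.log (sSup F)⁻¹) x :=
        ((continuousAt_log_inv hx.ne').const_mul _).div_const _
      exact ContinuousWithinAt.congr hcont.continuousWithinAt key (key x (le_refl x))
    · -- x < sSup F
      have hαne : (F ∩ Set.Iic x).Nonempty := ⟨sInf F, hmF, hxm⟩
      have hβne : (F ∩ Set.Ioi x).Nonempty := ⟨sSup F, hMF, hxM'⟩
      have hαmem := hαne.csSup_mem (hF.inter_of_left _)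
      have hβmem := hβne.csInf_mem (hF.inter_of_left _)
      set α := sSup (F ∩ Set.Iic x) with hα
      set β := sInf (F ∩ Set.Ioi x) with hβ
      have hαF : α ∈ F := hαmem.1
      have hαx : α ≤ x := hαmem.2
      have hβF : β ∈ F := hβmem.1
      have hβx : x < β := hβmem.2
      have h0α : (0:ℝ) < α := (hF01 hαF).1
      have hαβ : α < β := lt_of_le_of_lt hαx hβx
      have hgap : Set.Ioo α β ∩ F = ∅ := by
        apply Set.eq_empty_iff_forall_notMem.2
        rintro τ ⟨⟨hτ1, hτ2⟩, hτF⟩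
        rcases le_or_gt τ x with h | h
        · exact absurd (le_csSup (hF.inter_of_left _).bddAbove
            ⟨hτF, Set.mem_Iic.mpr h⟩) (not_le.mpr hτ1)
        · exact absurd (csInf_le (hF.inter_of_left _).bddBelow
            ⟨hτF, Set.mem_Ioi.mpr h⟩) (not_le.mpr hτ2)
      have key : ∀ y ∈ Set.Ici x ∩ Set.Iio β, ufun F y = chordFun α β y := by
        intro y hy
        obtain ⟨hy1, hy2⟩ := hy
        rcases eq_or_lt_of_le (Set.mem_Ici.mp hy1) with heq | hyx
        · rw [← heq]
          by_cases hxF : x ∈ F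
          · have hαy : α = x := by rw [hα, sSup_inter_Iic_self hxF]
            rw [ufun_mem hF hxF, hαy]
            exact (chordFun_left hx hβx).symm
          · have hαy : α < x := lt_of_le_of_ne hαx (fun h => hxF (h ▸ hαF))
            exact ufun_chord hF hαF hβF hgap ⟨hαy, hβx⟩
        · exact ufun_chord hF hαF hβF hgap ⟨lt_of_le_of_lt hαx hyx, Set.mem_Iio.mp hy2⟩
      rw [← continuousWithinAt_inter (isOpen_Iio.mem_nhds hβx)]
      exact ContinuousWithinAt.congr (chordFun_continuousAt hx.ne').continuousWithinAt
        key (key x ⟨le_refl x, hβx⟩)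

lemma neg_div_sq_mul {B r : ℝ} (hr : r ≠ 0) : (-B / r) ^ 2 * r = B ^ 2 / r := by
  field_simp

lemma gfun_sq {x : ℝ} (hx : 0 ≤ Real.log x⁻¹) : (gfun x) ^ 2 = Real.log x⁻¹ / (2 * π) := by
  rw [gfun, sq_sqrt (div_nonneg hx (by positivity))]

lemma slope_sq_le {α β : ℝ} (hσα : 0 < Real.log α⁻¹) (hσβ : 0 ≤ Real.log β⁻¹)
    (hlt : Real.log β⁻¹ < Real.log α⁻¹) :
    ((gfun β - gfun α) / (Real.log β⁻¹ - Real.log α⁻¹)) ^ 2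
      ≤ 1 / (2 * π * Real.log α⁻¹) := by
  have hπ : (0:ℝ) < 2 * π := by positivity
  set u := gfun α with hu
  set v := gfun β with hv
  have hu2 : u ^ 2 = Real.log α⁻¹ / (2 * π) := gfun_sq hσα.le
  have hv2 : v ^ 2 = Real.log β⁻¹ / (2 * π) := gfun_sq hσβ
  have hu0 : 0 < u := by
    rw [hu, gfun]
    exact Real.sqrt_pos.mpr (by positivity)
  have hv0 : 0 ≤ v := Real.sqrt_nonneg _
  have husq : v ^ 2 < u ^ 2 := by rw [hu2, hv2]; gcongr
  have hvu : v < u := by nlinarith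
  have ha : Real.log α⁻¹ = 2 * π * u ^ 2 := by rw [hu2]; field_simp
  have hb : Real.log β⁻¹ = 2 * π * v ^ 2 := by rw [hv2]; field_simp
  rw [ha, hb]
  have hden : 2 * π * v ^ 2 - 2 * π * u ^ 2 ≠ 0 := by nlinarith
  have hstep : (v - u) / (2 * π * v ^ 2 - 2 * π * u ^ 2) = 1 / (2 * π * (u + v)) := by
    rw [div_eq_div_iff hden (by positivity)]
    ring
  rw [hstep, div_pow, one_pow, div_le_div_iff₀ (by positivity) (by positivity)]
  nlinarith [sq_nonneg v, mul_pos hπ hu0, mul_nonneg (mul_nonneg hπ.le hu0.le) hv0]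

lemma ufun_deriv_sq_bound {F : Set ℝ} (hF : F.Finite) (hne : F.Nonempty)
    (hF01 : F ⊆ Set.Ioo 0 1) {r : ℝ} (hr : r ∈ Set.Ioo (0:ℝ) 1) (hrF : r ∉ F) :
    (deriv (ufun F) r) ^ 2 * r ≤ 1 / (2 * π * Real.log (sSup F)⁻¹ * sInf F) := by
  have hmF : sInf F ∈ F := hne.csInf_mem hF
  have hMF : sSup F ∈ F := hne.csSup_mem hF
  have hm01 := hF01 hmF
  have hM01 := hF01 hMF
  have hσM : 0 < Real.log (sSup F)⁻¹ := log_inv_pos hM01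
  have hRHS : 0 < 1 / (2 * π * Real.log (sSup F)⁻¹ * sInf F) := by
    have := hm01.1; positivity
  rcases lt_or_ge r (sInf F) with hrm | hrm
  · have h0 : deriv (ufun F) r = 0 :=
      deriv_locally_const (c := gfun (sInf F)) (p := 0) (q := sInf F)
        (fun y hy => ufun_const_left hF hne hy.2.le) ⟨hr.1, hrm⟩
    rw [h0]
    simpa using hRHS.le
  have hrm' : sInf F < r := lt_of_le_of_ne hrm (fun h => hrF (h ▸ hmF))
  rcases lt_or_ge r (sSup F) with hrM | hrM
  · obtain ⟨α, β, hα, hβ, hgap, hrg⟩ := exists_gap hF hne hrm' hrM hrF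
    have h0α := (hF01 hα).1
    have hσα : 0 < Real.log α⁻¹ := log_inv_pos (hF01 hα)
    have hσβ : 0 < Real.log β⁻¹ := log_inv_pos (hF01 hβ)
    have hαβ : α < β := lt_trans hrg.1 hrg.2
    have hlt : Real.log β⁻¹ < Real.log α⁻¹ :=
      Real.log_lt_log (inv_pos.mpr (lt_trans h0α hαβ)) ((inv_lt_inv₀ (lt_trans h0α hαβ) h0α).mpr hαβ)
    set B := (gfun β - gfun α) / (Real.log β⁻¹ - Real.log α⁻¹) with hB
    have hder : deriv (ufun F) r = -B / r := by
      apply deriv_affine_log (A := gfun α - B * Real.log α⁻¹) h0α.le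
        (q := β) _ hrg
      intro y hy
      rw [ufun_chord hF hα hβ hgap hy, chordFun, hB]
      ring
    rw [hder]
    have hB2 : B ^ 2 ≤ 1 / (2 * π * Real.log α⁻¹) := slope_sq_le hσα hσβ.le hlt
    have hσαM : Real.log (sSup F)⁻¹ ≤ Real.log α⁻¹ := by
      rcases eq_or_lt_of_le (le_csSup hF.bddAbove hα) with h | h
      · rw [h]
      · exact (Real.log_lt_log (inv_pos.mpr (hF01 hMF).1)
          ((inv_lt_inv₀ (hF01 hMF).1 h0α).mpr h)).le
    rw [neg_div_sq_mul (ne_of_gt hr.1)]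
    have hB2' : B ^ 2 ≤ 1 / (2 * π * Real.log (sSup F)⁻¹) :=
      hB2.trans (one_div_le_one_div_of_le (by positivity)
        (mul_le_mul_of_nonneg_left hσαM (by positivity)))
    rw [← div_div]
    exact div_le_div₀ (by positivity) hB2' hm01.1 hrm'.le
  · -- tail region
    have hrM' : sSup F < r := lt_of_le_of_ne hrM (fun h => hrF (h.symm ▸ hMF))
    set B := gfun (sSup F) / Real.log (sSup F)⁻¹ with hB
    have hder : deriv (ufun F) r = -B / r := by
      apply deriv_affine_log (A := 0) (p := sSup F) (q := 2) (hF01 hMF).1.le _ ⟨hrM', by linarith [hr.2]⟩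
      intro y hy
      rw [ufun_tail hF hne hF01 hy.1, hB]
      ring
    rw [hder]
    have hmr : sInf F ≤ r := hrm
    have hB2 : B ^ 2 = 1 / (2 * π * Real.log (sSup F)⁻¹) := by
      rw [hB, div_pow, gfun_sq hσM.le]
      generalize hσ : Real.log (sSup F)⁻¹ = σ at hσM ⊢
      have hσ0 : σ ≠ 0 := ne_of_gt hσM
      field_simp
    have hr0 : r ≠ 0 := ne_of_gt hr.1
    rw [neg_div_sq_mul hr0, hB2]
    calc (1 / (2 * π * Real.log (sSup F)⁻¹)) / r
        ≤ (1 / (2 * π * Real.log (sSup F)⁻¹)) / sInf F :=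
          div_le_div₀ (by positivity) (le_refl _) hm01.1 hmr
      _ = 1 / (2 * π * Real.log (sSup F)⁻¹ * sInf F) := div_div _ _ _

lemma ufun_integrableOn {F : Set ℝ} (hF : F.Finite) (hne : F.Nonempty)
    (hF01 : F ⊆ Set.Ioo 0 1) :
    MeasureTheory.IntegrableOn (fun r => (deriv (ufun F) r) ^ 2 * r)
      (Set.Ioo 0 1) volume := by
  set M := 1 / (2 * π * Real.log (sSup F)⁻¹ * sInf F) with hM
  have hmeas : Measurable (fun r : ℝ => (deriv (ufun F) r) ^ 2 * r) :=
    ((measurable_deriv _).pow_const 2).mul measurable_id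
  have hFz : volume F = 0 := hF.measure_zero volume
  apply MeasureTheory.Integrable.mono' (g := fun _ : ℝ => M)
    ((integrableOn_const_iff).mpr (Or.inr (by rw [Real.volume_Ioo]; exact ENNReal.ofReal_lt_top)))
    hmeas.aestronglyMeasurable
  rw [ae_restrict_iff' measurableSet_Ioo]
  have hae : ∀ᵐ r : ℝ ∂volume, r ∉ F := by
    rw [ae_iff]
    simpa using hFz
  filter_upwards [hae] with r hrF hr
  rw [Real.norm_eq_abs, abs_of_nonneg (mul_nonneg (sq_nonneg _) hr.1.le)]
  exact ufun_deriv_sq_bound hF hne hF01 hr hrF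

lemma isTower_ufun {F : Set ℝ} (hF : F.Finite) (hne : F.Nonempty)
    (hF01 : F ⊆ Set.Ioo 0 1) : IsTower F (ufun F) := by
  have hMF : sSup F ∈ F := hne.csSup_mem hF
  have hM01 := hF01 hMF
  refine ⟨hF.isClosed, hne, hF01,
    fun x hx => (ufun_continuousAt hF hne hF01 hx.1).continuousWithinAt, ?_,
    fun r hr => ufun_mem hF hr, fun a b hab hsub => ufun_affine hF hne hF01 hab hsub,
    ufun_integrableOn hF hne hF01⟩
  rw [ufun_tail hF hne hF01 hM01.2]
  simp

lemma continuousAt_affine_log {A B x : ℝ} (hx : x ≠ 0) :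
    ContinuousAt (fun r : ℝ => A + B * Real.log r⁻¹) x :=
  continuousAt_const.add (((Real.continuousAt_log (inv_ne_zero hx)).comp
    (continuousAt_inv₀ hx)).const_mul _)

lemma endpoint_left_val {w : ℝ → ℝ} (hw : ContinuousOn w (Set.Ioc 0 1)) {α β A B : ℝ}
    (hα : α ∈ Set.Ioc (0:ℝ) 1) (hαβ : α < β) (hβ1 : β ≤ 1)
    (h : ∀ r ∈ Set.Ioo α β, w r = A + B * Real.log r⁻¹) :
    w α = A + B * Real.log α⁻¹ := by
  have hsub : Set.Ioo α β ⊆ Set.Ioc 0 1 :=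
    fun x hx => ⟨lt_trans hα.1 hx.1, le_trans hx.2.le hβ1⟩
  have hne : (𝓝[Set.Ioo α β] α).NeBot := by
    rw [mem_closure_iff_nhdsWithin_neBot.symm, closure_Ioo (ne_of_lt hαβ)]
    exact ⟨le_refl α, hαβ.le⟩
  have h1 : Tendsto w (𝓝[Set.Ioo α β] α) (𝓝 (w α)) :=
    (hw α hα).mono hsub
  have h2 : Tendsto (fun r => A + B * Real.log r⁻¹) (𝓝[Set.Ioo α β] α)
      (𝓝 (A + B * Real.log α⁻¹)) :=
    (continuousAt_affine_log (ne_of_gt hα.1)).continuousWithinAt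
  have h3 : Tendsto w (𝓝[Set.Ioo α β] α) (𝓝 (A + B * Real.log α⁻¹)) :=
    h2.congr' (Filter.eventuallyEq_of_mem self_mem_nhdsWithin (fun r hr => (h r hr).symm))
  exact tendsto_nhds_unique h1 h3

lemma endpoint_right_val {w : ℝ → ℝ} (hw : ContinuousOn w (Set.Ioc 0 1)) {α β A B : ℝ}
    (hβ : β ∈ Set.Ioc (0:ℝ) 1) (hαβ : α < β) (hα0 : 0 ≤ α)
    (h : ∀ r ∈ Set.Ioo α β, w r = A + B * Real.log r⁻¹) :
    w β = A + B * Real.log β⁻¹ := by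
  have hsub : Set.Ioo α β ⊆ Set.Ioc 0 1 :=
    fun x hx => ⟨lt_of_le_of_lt hα0 hx.1, le_trans hx.2.le hβ.2⟩
  have hne : (𝓝[Set.Ioo α β] β).NeBot := by
    rw [mem_closure_iff_nhdsWithin_neBot.symm, closure_Ioo (ne_of_lt hαβ)]
    exact ⟨hαβ.le, le_refl β⟩
  have h1 : Tendsto w (𝓝[Set.Ioo α β] β) (𝓝 (w β)) := (hw β hβ).mono hsub
  have h2 : Tendsto (fun r => A + B * Real.log r⁻¹) (𝓝[Set.Ioo α β] β)
      (𝓝 (A + B * Real.log β⁻¹)) :=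
    (continuousAt_affine_log (ne_of_gt hβ.1)).continuousWithinAt
  have h3 : Tendsto w (𝓝[Set.Ioo α β] β) (𝓝 (A + B * Real.log β⁻¹)) :=
    h2.congr' (Filter.eventuallyEq_of_mem self_mem_nhdsWithin (fun r hr => (h r hr).symm))
  exact tendsto_nhds_unique h1 h3

lemma B_eq_zero {w : ℝ → ℝ} {A B c : ℝ} (hc : c ∈ Set.Ioo (0:ℝ) 1)
    (h : ∀ r ∈ Set.Ioo (0:ℝ) c, w r = A + B * Real.log r⁻¹)
    (hint : MeasureTheory.IntegrableOn (fun r => (deriv w r) ^ 2 * r) (Set.Ioo 0 1) volume) :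
    B = 0 := by
  by_contra hB
  have hd : ∀ x ∈ Set.Ioo (0:ℝ) c, (deriv w x) ^ 2 * x = B ^ 2 / x := by
    intro x hx
    rw [deriv_affine_log (le_refl 0) h hx, neg_div_sq_mul (ne_of_gt hx.1)]
  have I1 : MeasureTheory.IntegrableOn (fun r => (deriv w r) ^ 2 * r) (Set.Ioo 0 c) volume :=
    hint.mono_set (Set.Ioo_subset_Ioo (le_refl 0) hc.2.le)
  have I2 : MeasureTheory.IntegrableOn (fun r : ℝ => B ^ 2 / r) (Set.Ioo 0 c) volume :=
    I1.congr_fun hd measurableSet_Ioo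
  have I3 : MeasureTheory.IntegrableOn (fun r : ℝ => (B ^ 2)⁻¹ * (B ^ 2 / r))
      (Set.Ioo 0 c) volume := I2.const_mul _
  have I4 : MeasureTheory.IntegrableOn (fun r : ℝ => r ^ (-1:ℝ)) (Set.Ioo 0 c) volume := by
    apply I3.congr_fun _ measurableSet_Ioo
    intro x hx
    simp only []
    rw [Real.rpow_neg hx.1.le, Real.rpow_one]
    field_simp
  rw [intervalIntegral.integrableOn_Ioo_rpow_iff hc.1] at I4
  linarith

lemma exists_gapC {C : Set ℝ} (hC : IsClosed C) (hne : C.Nonempty)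
    (hC01 : C ⊆ Set.Ioo 0 1) {x : ℝ}
    (hm : sInf C < x) (hM : x < sSup C) (hx : x ∉ C) :
    ∃ α β, α ∈ C ∧ β ∈ C ∧ Set.Ioo α β ∩ C = ∅ ∧ x ∈ Set.Ioo α β := by
  have hbddA : BddAbove C := ⟨1, fun y hy => (hC01 hy).2.le⟩
  have hbddB : BddBelow C := ⟨0, fun y hy => (hC01 hy).1.le⟩
  have hmC : sInf C ∈ C := hC.csInf_mem hne hbddB
  have hMC : sSup C ∈ C := hC.csSup_mem hne hbddA
  have h1 : (C ∩ Set.Iic x).Nonempty := ⟨sInf C, hmC, hm.le⟩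
  have h2 : (C ∩ Set.Ici x).Nonempty := ⟨sSup C, hMC, hM.le⟩
  have hc1 : IsClosed (C ∩ Set.Iic x) := hC.inter isClosed_Iic
  have hc2 : IsClosed (C ∩ Set.Ici x) := hC.inter isClosed_Ici
  have hb1 : BddAbove (C ∩ Set.Iic x) := ⟨x, fun y hy => hy.2⟩
  have hb2 : BddBelow (C ∩ Set.Ici x) := ⟨x, fun y hy => hy.2⟩
  have hα := hc1.csSup_mem h1 hb1
  have hβ := hc2.csInf_mem h2 hb2
  refine ⟨sSup (C ∩ Set.Iic x), sInf (C ∩ Set.Ici x), hα.1, hβ.1, ?_, ?_, ?_⟩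
  · apply Set.eq_empty_iff_forall_notMem.2
    rintro τ ⟨⟨hτ1, hτ2⟩, hτC⟩
    rcases le_or_gt τ x with h | h
    · exact absurd (le_csSup hb1 ⟨hτC, Set.mem_Iic.mpr h⟩) (not_le.mpr hτ1)
    · exact absurd (csInf_le hb2 ⟨hτC, Set.mem_Ici.mpr h.le⟩) (not_le.mpr hτ2)
  · rcases lt_or_eq_of_le (Set.mem_Iic.mp hα.2) with h | h
    · exact h
    · exact absurd (h ▸ hα.1) hx
  · rcases lt_or_eq_of_le (Set.mem_Ici.mp hβ.2) with h | h
    · exact h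
    · exact absurd (h ▸ hβ.1) hx

lemma capture {U : Set ℝ} (hU : IsOpen U) (hUsub : U ⊆ Set.Ioo 0 1) {f : ℝ → ℝ}
    (hf : MeasureTheory.IntegrableOn f U volume) {δ : ℝ} (hδ : 0 < δ) :
    ∃ K, IsCompact K ∧ K ⊆ U ∧ ∫ x in U \ K, f x < δ := by
  set K : ℕ → Set ℝ := fun n =>
    {x : ℝ | x ∈ Set.Icc (0:ℝ) 1 ∧ 1 / (n + 1 : ℝ) ≤ Metric.infDist x Uᶜ} with hK
  have hKclosed : ∀ n, IsClosed (K n) := fun n =>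
    (isClosed_Icc.inter (isClosed_le continuous_const (Metric.continuous_infDist_pt _)))
  have hKcompact : ∀ n, IsCompact (K n) := fun n =>
    Metric.isCompact_of_isClosed_isBounded (hKclosed n)
      (Metric.isBounded_Icc (0:ℝ) 1 |>.subset (fun x hx => hx.1))
  have hKU : ∀ n, K n ⊆ U := by
    intro n x hx
    by_contra hxU
    have : Metric.infDist x Uᶜ = 0 := Metric.infDist_zero_of_mem hxU
    have h2 := hx.2
    rw [this] at h2
    have : (0:ℝ) < 1 / (n + 1 : ℝ) := by positivity
    linarith
  have hmono : Monotone K := by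
    intro n m hnm x hx
    refine ⟨hx.1, le_trans ?_ hx.2⟩
    apply one_div_le_one_div_of_le (by positivity)
    exact_mod_cast add_le_add_left (Nat.cast_le.mpr hnm) 1
  have hunion : (⋃ n, K n) = U := by
    apply Set.Subset.antisymm (Set.iUnion_subset hKU)
    intro x hx
    have hxc : x ∉ Uᶜ := fun h => h hx
    have hne : (Uᶜ : Set ℝ).Nonempty := ⟨2, by
      intro h2; exact absurd (hUsub h2).2 (by norm_num)⟩
    have hpos : 0 < Metric.infDist x Uᶜ :=
      (hU.isClosed_compl.notMem_iff_infDist_pos hne).mp hxc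
    obtain ⟨n, hn⟩ := exists_nat_one_div_lt hpos
    exact Set.mem_iUnion.mpr ⟨n, ⟨Set.mem_Icc.mpr ⟨(hUsub hx).1.le, (hUsub hx).2.le⟩, hn.le⟩⟩
  have htend : Tendsto (fun n => ∫ x in K n, f x) atTop (𝓝 (∫ x in U, f x)) := by
    have := MeasureTheory.tendsto_setIntegral_of_monotone
      (fun n => (hKclosed n).measurableSet) hmono (by rw [hunion]; exact hf)
    rwa [hunion] at this
  have hev : ∀ᶠ n in atTop, (∫ x in U, f x) - δ < ∫ x in K n, f x :=
    htend.eventually (eventually_gt_nhds (by linarith))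
  obtain ⟨N, hN⟩ := hev.exists
  refine ⟨K N, hKcompact N, hKU N, ?_⟩
  rw [MeasureTheory.integral_diff (hKclosed N).measurableSet hf (hKU N)]
  linarith

/-- For any closed set `C ⊂ (0,1)` of Lebesgue measure zero with tower `μ_C`, and any
`ε > 0`, there is a finite subset `C_ε ⊆ C` whose tower `μ_{C_ε}` satisfies
`‖∇(μ_C − μ_{C_ε})‖₂² < ε`. Consequently there is a sequence of finite sets `Cⱼ ⊆ C`
with `μ_{Cⱼ} → μ_C` in `H¹₀(B)`. -/
theorem tower_finite_approximation (C : Set ℝ) (w : ℝ → ℝ)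
    (hw : IsTower C w) (hC0 : MeasureTheory.volume C = 0) :
    (∀ ε > (0:ℝ), ∃ (F : Set ℝ) (u : ℝ → ℝ), F ⊆ C ∧ F.Finite ∧ F.Nonempty ∧
      IsTower F u ∧
      2 * π * ∫ r in Set.Ioo (0:ℝ) 1, (deriv w r - deriv u r) ^ 2 * r < ε) ∧
    ∃ (F : ℕ → Set ℝ) (u : ℕ → ℝ → ℝ),
      (∀ j, F j ⊆ C ∧ (F j).Finite ∧ IsTower (F j) (u j)) ∧
      Tendsto (fun j =>
          2 * π * ∫ r in Set.Ioo (0:ℝ) 1, (deriv w r - deriv (u j) r) ^ 2 * r)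
        atTop (𝓝 0) := by
  obtain ⟨hCclosed, hCne, hC01, hwcont, hw1, hwval, hwaff, hwint⟩ := hw
  have H1 : ∀ ε > (0:ℝ), ∃ (F : Set ℝ) (u : ℝ → ℝ), F ⊆ C ∧ F.Finite ∧ F.Nonempty ∧
      IsTower F u ∧
      2 * π * ∫ r in Set.Ioo (0:ℝ) 1, (deriv w r - deriv u r) ^ 2 * r < ε := by
    intro ε hε
    have hbddA : BddAbove C := ⟨1, fun y hy => (hC01 hy).2.le⟩
    have hbddB : BddBelow C := ⟨0, fun y hy => (hC01 hy).1.le⟩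
    have hmC : sInf C ∈ C := hCclosed.csInf_mem hCne hbddB
    have hMC : sSup C ∈ C := hCclosed.csSup_mem hCne hbddA
    have hm01 := hC01 hmC
    have hM01 := hC01 hMC
    have hσM : 0 < Real.log (sSup C)⁻¹ := log_inv_pos hM01
    set M₀ : ℝ := 1 / (2 * π * Real.log (sSup C)⁻¹ * sInf C) with hM₀
    have hM₀pos : 0 < M₀ := by
      have := hm01.1
      positivity
    set δ : ℝ := ε / (2 * π * (2 + 2 * M₀) + 1) with hδdef
    have hδpos : 0 < δ := by positivity
    have hδfin : 2 * π * (2 * δ + 2 * M₀ * δ) < ε := by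
      have hd : (0:ℝ) < 2 * π * (2 + 2 * M₀) + 1 := by positivity
      have heq : 2 * π * (2 * δ + 2 * M₀ * δ) = (2 * π * (2 + 2 * M₀)) * δ := by ring
      rw [heq, hδdef, mul_comm, div_mul_eq_mul_div, div_lt_iff₀ hd]
      nlinarith [pi_pos]
    set U : Set ℝ := Set.Ioo (sInf C) (sSup C) \ C with hU
    have hUopen : IsOpen U := isOpen_Ioo.sdiff hCclosed
    have hUsub01 : U ⊆ Set.Ioo 0 1 :=
      fun x hx => ⟨lt_trans hm01.1 hx.1.1, lt_trans hx.1.2 hM01.2⟩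
    have hUvol : volume U < ⊤ :=
      lt_of_le_of_lt (measure_mono hUsub01) (by rw [Real.volume_Ioo]; exact ENNReal.ofReal_lt_top)
    have hfint : MeasureTheory.IntegrableOn (fun x => (deriv w x) ^ 2 * x + 1) U volume :=
      (hwint.mono_set hUsub01).add ((integrableOn_const_iff).mpr (Or.inr hUvol))
    obtain ⟨K, hKcomp, hKU, hKint⟩ := capture hUopen hUsub01 hfint hδpos
    -- gap intervals for points of K
    have hgapx : ∀ x : K, ∃ α β, α ∈ C ∧ β ∈ C ∧ Set.Ioo α β ∩ C = ∅ ∧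
        (x : ℝ) ∈ Set.Ioo α β := by
      intro x
      have hxU := hKU x.2
      exact exists_gapC hCclosed hCne hC01 hxU.1.1 hxU.1.2 hxU.2
    choose av bv hav hbv hgapv hxv using hgapx
    have hcover : K ⊆ ⋃ x : K, Set.Ioo (av x) (bv x) :=
      fun x hx => Set.mem_iUnion.mpr ⟨⟨x, hx⟩, hxv ⟨x, hx⟩⟩
    obtain ⟨t, ht⟩ := hKcomp.elim_finite_subcover
      (fun x : K => Set.Ioo (av x) (bv x)) (fun _ => isOpen_Ioo) hcover
    set F : Set ℝ := {sInf C, sSup C} ∪ (⋃ x ∈ t, {av x, bv x}) with hF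
    have hFC : F ⊆ C := by
      rintro τ (h | h)
      · rcases h with h | h
        · exact h ▸ hmC
        · exact h ▸ hMC
      · simp only [Set.mem_iUnion] at h
        obtain ⟨x, _, hx⟩ := h
        rcases hx with h | h
        · exact h ▸ hav x
        · exact h ▸ hbv x
    have hFfin : F.Finite := by
      apply Set.Finite.union
      · exact (Set.finite_singleton _).insert _
      · exact Set.Finite.biUnion t.finite_toSet
          (fun x _ => (Set.finite_singleton _).insert _)
    have hFne : F.Nonempty := ⟨sInf C, Or.inl (Or.inl rfl)⟩
    have hF01 : F ⊆ Set.Ioo 0 1 := fun x hx => hC01 (hFC hx)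
    have hmFmem : sInf C ∈ F := Or.inl (Or.inl rfl)
    have hMFmem : sSup C ∈ F := Or.inl (Or.inr rfl)
    have hsInfF : sInf F = sInf C :=
      le_antisymm (csInf_le hFfin.bddBelow hmFmem)
        (le_csInf hFne (fun τ hτ => csInf_le hbddB (hFC hτ)))
    have hsSupF : sSup F = sSup C :=
      le_antisymm (csSup_le hFne (fun τ hτ => le_csSup hbddA (hFC hτ)))
        (le_csSup hFfin.bddAbove hMFmem)
    set u : ℝ → ℝ := ufun F with hu
    have htower : IsTower F u := isTower_ufun hFfin hFne hF01
    have huint : MeasureTheory.IntegrableOn (fun r => (deriv u r) ^ 2 * r)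
        (Set.Ioo 0 1) volume := htower.2.2.2.2.2.2.2
    -- (G1)
    have hG1 : ∀ r ∈ Set.Ioo (0:ℝ) (sInf C), deriv w r = deriv u r := by
      have hsub : Set.Ioo (0:ℝ) (sInf C) ⊆ Set.Ioo 0 1 \ C := by
        intro x hx
        refine ⟨⟨hx.1, lt_trans hx.2 hm01.2⟩, fun hxC => ?_⟩
        exact absurd (csInf_le hbddB hxC) (not_le.mpr hx.2)
      obtain ⟨A, B, hAB⟩ := hwaff 0 (sInf C) hm01.1 hsub
      have hB0 : B = 0 := B_eq_zero hm01 hAB hwint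
      intro r hr
      rw [deriv_affine_log (le_refl 0) hAB hr, hB0,
        deriv_locally_const (c := gfun (sInf F)) (p := 0) (q := sInf F)
          (fun y hy => ufun_const_left hFfin hFne hy.2.le) (by rw [hsInfF]; exact hr)]
      simp
    -- (G2)
    have hG2 : ∀ r ∈ Set.Ioo (sSup C) 1, deriv w r = deriv u r := by
      have hsub : Set.Ioo (sSup C) 1 ⊆ Set.Ioo 0 1 \ C := by
        intro x hx
        refine ⟨⟨lt_trans hM01.1 hx.1, hx.2⟩, fun hxC => ?_⟩
        exact absurd (le_csSup hbddA hxC) (not_le.mpr hx.1)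
      obtain ⟨A, B, hAB⟩ := hwaff (sSup C) 1 hM01.2 hsub
      have hA0 : A = 0 := by
        have := endpoint_right_val hwcont (Set.mem_Ioc.mpr ⟨one_pos, le_refl 1⟩)
          hM01.2 hM01.1.le hAB
        rw [hw1] at this
        simpa using this.symm
      have hgv : w (sSup C) = gfun (sSup C) := hwval _ hMC
      have hBv : gfun (sSup C) = A + B * Real.log (sSup C)⁻¹ := by
        rw [← hgv]
        exact endpoint_left_val hwcont ⟨hM01.1, hM01.2.le⟩ hM01.2 (le_refl 1) hAB
      have hB : B = gfun (sSup C) / Real.log (sSup C)⁻¹ := by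
        rw [eq_div_iff (ne_of_gt hσM), hBv, hA0]
        ring
      have htail : ∀ y ∈ Set.Ioo (sSup C) 1, u y = 0 + (gfun (sSup C) /
          Real.log (sSup C)⁻¹) * Real.log y⁻¹ := by
        intro y hy
        rw [hu, ufun_tail hFfin hFne hF01 (by rw [hsSupF]; exact hy.1), hsSupF]
        ring
      intro r hr
      rw [deriv_affine_log hM01.1.le hAB hr,
        deriv_affine_log hM01.1.le htail hr, hB]
    -- (G3)
    have hG3 : ∀ x ∈ t, ∀ r ∈ Set.Ioo (av x) (bv x), deriv w r = deriv u r := by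
      intro x hxt
      have hα01 := hC01 (hav x)
      have hβ01 := hC01 (hbv x)
      have hαβ : av x < bv x := lt_trans (hxv x).1 (hxv x).2
      have hsub : Set.Ioo (av x) (bv x) ⊆ Set.Ioo 0 1 \ C := by
        intro y hy
        refine ⟨⟨lt_trans hα01.1 hy.1, lt_trans hy.2 hβ01.2⟩, fun hyC => ?_⟩
        exact Set.eq_empty_iff_forall_notMem.1 (hgapv x) y ⟨hy, hyC⟩
      obtain ⟨A, B, hAB⟩ := hwaff (av x) (bv x) hαβ hsub
      have hgvα : w (av x) = gfun (av x) := hwval _ (hav x)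
      have hgvβ : w (bv x) = gfun (bv x) := hwval _ (hbv x)
      have hvα : gfun (av x) = A + B * Real.log (av x)⁻¹ := by
        rw [← hgvα]
        exact endpoint_left_val hwcont ⟨hα01.1, hα01.2.le⟩ hαβ hβ01.2.le hAB
      have hvβ : gfun (bv x) = A + B * Real.log (bv x)⁻¹ := by
        rw [← hgvβ]
        exact endpoint_right_val hwcont ⟨hβ01.1, hβ01.2.le⟩ hαβ hα01.1.le hAB
      have hD : Real.log (bv x)⁻¹ - Real.log (av x)⁻¹ ≠ 0 :=
        ne_of_lt (sub_neg.mpr (log_inv_lt_log_inv hα01.1 hαβ))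
      have hBeq : B = (gfun (bv x) - gfun (av x)) /
          (Real.log (bv x)⁻¹ - Real.log (av x)⁻¹) := by
        rw [eq_div_iff hD, hvα, hvβ]
        ring
      have hαF : av x ∈ F := Or.inr (Set.mem_biUnion hxt (Or.inl rfl))
      have hβF : bv x ∈ F := Or.inr (Set.mem_biUnion hxt (Or.inr rfl))
      have hgapF : Set.Ioo (av x) (bv x) ∩ F = ∅ := by
        apply Set.eq_empty_iff_forall_notMem.2
        rintro τ ⟨hτ1, hτ2⟩
        exact Set.eq_empty_iff_forall_notMem.1 (hgapv x) τ ⟨hτ1, hFC hτ2⟩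
      have huch : ∀ y ∈ Set.Ioo (av x) (bv x), u y =
          (gfun (av x) - (gfun (bv x) - gfun (av x)) * Real.log (av x)⁻¹ /
            (Real.log (bv x)⁻¹ - Real.log (av x)⁻¹)) +
          ((gfun (bv x) - gfun (av x)) /
            (Real.log (bv x)⁻¹ - Real.log (av x)⁻¹)) * Real.log y⁻¹ := by
        intro y hy
        rw [hu, ufun_chord hFfin hαF hβF hgapF hy, chordFun]
        ring
      intro r hr
      rw [deriv_affine_log hα01.1.le hAB hr, deriv_affine_log hα01.1.le huch hr, hBeq]
    -- the integrand
    set h : ℝ → ℝ := fun r => (deriv w r - deriv u r) ^ 2 * r with hh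
    have hmeas : Measurable h :=
      (((measurable_deriv w).sub (measurable_deriv u)).pow_const 2).mul measurable_id
    have hdom : ∀ r ∈ Set.Ioo (0:ℝ) 1, h r ≤ 2 * ((deriv w r) ^ 2 * r) +
        2 * ((deriv u r) ^ 2 * r) := by
      intro r hr
      have h1 : (deriv w r - deriv u r) ^ 2 ≤ 2 * (deriv w r) ^ 2 + 2 * (deriv u r) ^ 2 := by
        nlinarith [sq_nonneg (deriv w r + deriv u r)]
      calc h r = (deriv w r - deriv u r) ^ 2 * r := rfl
        _ ≤ (2 * (deriv w r) ^ 2 + 2 * (deriv u r) ^ 2) * r :=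
            mul_le_mul_of_nonneg_right h1 hr.1.le
        _ = 2 * ((deriv w r) ^ 2 * r) + 2 * ((deriv u r) ^ 2 * r) := by ring
    have hhnonneg : ∀ r ∈ Set.Ioo (0:ℝ) 1, 0 ≤ h r :=
      fun r hr => mul_nonneg (sq_nonneg _) hr.1.le
    have hgint : MeasureTheory.IntegrableOn
        (fun r => 2 * ((deriv w r) ^ 2 * r) + 2 * ((deriv u r) ^ 2 * r))
        (Set.Ioo 0 1) volume := (hwint.const_mul 2).add (huint.const_mul 2)
    have hhint : MeasureTheory.IntegrableOn h (Set.Ioo 0 1) volume := by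
      apply MeasureTheory.Integrable.mono' hgint hmeas.aestronglyMeasurable
      rw [ae_restrict_iff' measurableSet_Ioo]
      filter_upwards with r hr
      rw [Real.norm_eq_abs, abs_of_nonneg (hhnonneg r hr)]
      exact hdom r hr
    -- good set where derivatives agree
    set good : Set ℝ := Set.Ioo 0 (sInf C) ∪ Set.Ioo (sSup C) 1 ∪
      (⋃ x ∈ t, Set.Ioo (av x) (bv x)) with hgood
    have hgoodmeas : MeasurableSet good :=
      (measurableSet_Ioo.union measurableSet_Ioo).union
        (MeasurableSet.biUnion t.countable_toSet (fun _ _ => measurableSet_Ioo))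
    have hgood0 : ∀ r ∈ good, h r = 0 := by
      rintro r ((h1 | h2) | h3)
      · show (deriv w r - deriv u r) ^ 2 * r = 0
        rw [hG1 r h1, sub_self]
        ring
      · show (deriv w r - deriv u r) ^ 2 * r = 0
        rw [hG2 r h2, sub_self]
        ring
      · simp only [Set.mem_iUnion] at h3
        obtain ⟨x, hxt, hr⟩ := h3
        show (deriv w r - deriv u r) ^ 2 * r = 0
        rw [hG3 x hxt r hr, sub_self]
        ring
    have hsplit : (∫ r in Set.Ioo (0:ℝ) 1, h r) =
        (∫ r in Set.Ioo (0:ℝ) 1 ∩ good, h r) + ∫ r in Set.Ioo (0:ℝ) 1 \ good, h r :=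
      (MeasureTheory.integral_inter_add_diff hgoodmeas hhint).symm
    have hzero : (∫ r in Set.Ioo (0:ℝ) 1 ∩ good, h r) = 0 := by
      rw [MeasureTheory.setIntegral_congr_fun (measurableSet_Ioo.inter hgoodmeas)
        (fun r hr => hgood0 r hr.2 : Set.EqOn h (fun _ => (0:ℝ)) _)]
      simp
    have hbadsub : Set.Ioo (0:ℝ) 1 \ good ⊆ C ∪ (U \ K) := by
      rintro r ⟨hr01, hrg⟩
      by_cases hrC : r ∈ C
      · exact Or.inl hrC
      rcases lt_trichotomy r (sInf C) with hlt | heq | hgt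
      · exact absurd (Or.inl (Or.inl ⟨hr01.1, hlt⟩)) hrg
      · exact absurd (by rw [heq]; exact hmC) hrC
      rcases lt_trichotomy r (sSup C) with hMlt | hMeq | hMgt
      · refine Or.inr ⟨⟨⟨hgt, hMlt⟩, hrC⟩, fun hrK => ?_⟩
        exact hrg (Or.inr (ht hrK))
      · exact absurd (by rw [hMeq]; exact hMC) hrC
      · exact absurd (Or.inl (Or.inr ⟨hMgt, hr01.2⟩)) hrg
    have hUKmeas : MeasurableSet (U \ K) :=
      hUopen.measurableSet.diff hKcomp.isClosed.measurableSet
    have hCUKmeas : MeasurableSet (C ∪ (U \ K)) :=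
      hCclosed.measurableSet.union hUKmeas
    have hCUKsub : C ∪ (U \ K) ⊆ Set.Ioo 0 1 := by
      rintro r (hr | hr)
      · exact hC01 hr
      · exact hUsub01 hr.1
    have hintCUK : MeasureTheory.IntegrableOn h (C ∪ (U \ K)) volume :=
      hhint.mono_set hCUKsub
    have hmono1 : (∫ r in Set.Ioo (0:ℝ) 1 \ good, h r) ≤ ∫ r in C ∪ (U \ K), h r := by
      apply MeasureTheory.setIntegral_mono_set hintCUK ?_ hbadsub.eventuallyLE
      · rw [EventuallyLE, ae_restrict_iff' hCUKmeas]
        filter_upwards with r hr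
        exact mul_nonneg (sq_nonneg _) (hCUKsub hr).1.le
    have hsplitC : (∫ r in C ∪ (U \ K), h r) = ∫ r in U \ K, h r := by
      have hdisj : Disjoint C (U \ K) := by
        rw [Set.disjoint_left]
        intro r hrC hrUK
        exact hrUK.1.2 hrC
      rw [MeasureTheory.setIntegral_union hdisj hUKmeas
        (hintCUK.mono_set Set.subset_union_left)
        (hintCUK.mono_set Set.subset_union_right),
        MeasureTheory.Measure.restrict_eq_zero.mpr hC0]
      simp
    have hUKvol : volume (U \ K) < ⊤ :=
      lt_of_le_of_lt (measure_mono Set.diff_subset) hUvol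
    have hUKsub01 : U \ K ⊆ Set.Ioo 0 1 := fun r hr => hUsub01 hr.1
    have hwintUK : MeasureTheory.IntegrableOn (fun r => (deriv w r) ^ 2 * r)
        (U \ K) volume := hwint.mono_set hUKsub01
    have hptwise : ∀ r ∈ U \ K, h r ≤ 2 * ((deriv w r) ^ 2 * r) + 2 * M₀ := by
      intro r hr
      have hr01 := hUsub01 hr.1
      have hrF : r ∉ F := fun hrF => hr.1.2 (hFC hrF)
      have hb := ufun_deriv_sq_bound hFfin hFne hF01 hr01 hrF
      rw [hsSupF, hsInfF, ← hM₀] at hb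
      have := hdom r hr01
      have h2 : 2 * ((deriv u r) ^ 2 * r) ≤ 2 * M₀ := by linarith
      linarith
    have hint2 : MeasureTheory.IntegrableOn
        (fun r => 2 * ((deriv w r) ^ 2 * r) + 2 * M₀) (U \ K) volume :=
      (hwintUK.const_mul 2).add ((integrableOn_const_iff).mpr (Or.inr hUKvol))
    have hmono2 : (∫ r in U \ K, h r) ≤
        ∫ r in U \ K, (2 * ((deriv w r) ^ 2 * r) + 2 * M₀) :=
      MeasureTheory.setIntegral_mono_on (hhint.mono_set hUKsub01) hint2 hUKmeas hptwise
    have hconst1 : MeasureTheory.IntegrableOn (fun _ : ℝ => (1:ℝ)) (U \ K) volume :=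
      (integrableOn_const_iff).mpr (Or.inr hUKvol)
    have hcapsplit : (∫ x in U \ K, ((deriv w x) ^ 2 * x + 1)) =
        (∫ x in U \ K, (deriv w x) ^ 2 * x) + (volume (U \ K)).toReal := by
      rw [MeasureTheory.integral_add hwintUK hconst1]
      simp [MeasureTheory.setIntegral_const, Measure.real]
    have hwnn : 0 ≤ ∫ x in U \ K, (deriv w x) ^ 2 * x :=
      MeasureTheory.setIntegral_nonneg hUKmeas
        (fun r hr => mul_nonneg (sq_nonneg _) (hUKsub01 hr).1.le)
    have hvolnn : (0:ℝ) ≤ (volume (U \ K)).toReal := ENNReal.toReal_nonneg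
    have hcap1 : (∫ x in U \ K, (deriv w x) ^ 2 * x) < δ := by
      rw [hcapsplit] at hKint
      linarith
    have hcap2 : (volume (U \ K)).toReal < δ := by
      rw [hcapsplit] at hKint
      linarith
    have hsum : (∫ r in U \ K, (2 * ((deriv w r) ^ 2 * r) + 2 * M₀)) =
        2 * (∫ r in U \ K, (deriv w r) ^ 2 * r) + 2 * M₀ * (volume (U \ K)).toReal := by
      rw [MeasureTheory.integral_add (hwintUK.const_mul 2)
        ((integrableOn_const_iff).mpr (Or.inr hUKvol)),
        MeasureTheory.integral_const_mul, MeasureTheory.setIntegral_const]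
      rw [smul_eq_mul, Measure.real]
      ring
    have hItot : (∫ r in Set.Ioo (0:ℝ) 1, h r) ≤ 2 * δ + 2 * M₀ * δ := by
      rw [hsplit, hzero, zero_add]
      refine le_trans (le_trans hmono1 (le_of_eq hsplitC)) (le_trans hmono2 ?_)
      rw [hsum]
      nlinarith [hcap1, hcap2, hM₀pos]
    have hfinal : 2 * π * (∫ r in Set.Ioo (0:ℝ) 1, h r) < ε := by
      calc 2 * π * (∫ r in Set.Ioo (0:ℝ) 1, h r)
          ≤ 2 * π * (2 * δ + 2 * M₀ * δ) :=
            mul_le_mul_of_nonneg_left hItot (by positivity)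
        _ < ε := hδfin
    exact ⟨F, u, hFC, hFfin, hFne, htower, hfinal⟩
  refine ⟨H1, ?_⟩
  have hchoice : ∀ j : ℕ, ∃ (F : Set ℝ) (u : ℝ → ℝ), F ⊆ C ∧ F.Finite ∧ F.Nonempty ∧
      IsTower F u ∧
      2 * π * (∫ r in Set.Ioo (0:ℝ) 1, (deriv w r - deriv u r) ^ 2 * r) < 1 / (j + 1) :=
    fun j => H1 (1 / (j + 1)) (by positivity)
  choose Fs us hs1 hs2 hs3 hs4 hs5 using hchoice
  refine ⟨Fs, us, fun j => ⟨hs1 j, hs2 j, hs4 j⟩, ?_⟩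
  apply squeeze_zero (fun j => ?_) (fun j => (hs5 j).le)
    tendsto_one_div_add_atTop_nhds_zero_nat
  exact mul_nonneg (by positivity) (MeasureTheory.setIntegral_nonneg measurableSet_Ioo
    (fun r hr => mul_nonneg (sq_nonneg _) hr.1.le))
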